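/- arXiv:1609.02444 — 3 statements merged into one kernel-verified Lean document; each statement's English description precedes it below -/
import Mathlib

section
/- Let (X,d) be a complete metric space and let I : X → (−∞,0] be a function of Baire class 1 (i.e. a pointwise limit of a sequence of continuous real-valued functions on X). Let X₀ be a nonempty dense subset of X with the following property: for any β < 0 there exists α = α(β) > 0 such that for any x ∈ X₀ with I(x) < β there exists a sequence (xₙ) ⊂ X₀ with xₙ → x in (X,d) and liminf_{n→∞} I(xₙ) ≥ I(x) + α(β). Then there exists a residual set S ⊆ X (i.e. a set whose complement is meagre) such that I(x) = 0 for all x ∈ S. -/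
open Filter Topology Set

/-- A Baire class 1 function on a complete metric space is continuous at the points of a
residual set. -/
lemma baire1_continuity_residual {X : Type*} [MetricSpace X] [CompleteSpace X]
    (I : X → ℝ) (f : ℕ → X → ℝ) (hf : ∀ n, Continuous (f n))
    (hlim : ∀ x, Tendsto (fun n => f n x) atTop (𝓝 (I x))) :
    {x | ContinuousAt I x} ∈ residual X := by
  -- the sets where the sequence is uniformly ε-Cauchy from index n
  set F : ℝ → ℕ → Set X := fun ε n => {x | ∀ p ≥ n, ∀ q ≥ n, |f p x - f q x| ≤ ε} with hF
  have hFclosed : ∀ ε n, IsClosed (F ε n) := by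
    intro ε n
    have : F ε n = ⋂ p, ⋂ (_ : p ≥ n), ⋂ q, ⋂ (_ : q ≥ n), {x | |f p x - f q x| ≤ ε} := by
      ext x; simp [hF]
    rw [this]
    refine isClosed_iInter fun p => isClosed_iInter fun _ =>
      isClosed_iInter fun q => isClosed_iInter fun _ => ?_
    exact isClosed_le (((hf p).sub (hf q)).abs) continuous_const
  have hFcover : ∀ ε > (0 : ℝ), ∀ x : X, ∃ n, x ∈ F ε n := by
    intro ε hε x
    have hc : CauchySeq (fun n => f n x) := (hlim x).cauchySeq
    obtain ⟨N, hN⟩ := Metric.cauchySeq_iff.mp hc ε hε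
    refine ⟨N, fun p hp q hq => ?_⟩
    have := hN p hp q hq
    rw [Real.dist_eq] at this
    exact this.le
  -- a uniform estimate against the limit on `F ε n`
  have hFlim : ∀ ε > (0 : ℝ), ∀ n, ∀ y ∈ F ε n, |f n y - I y| ≤ ε := by
    intro ε hε n y hy
    have htq : Tendsto (fun q => |f n y - f q y|) atTop (𝓝 (|f n y - I y|)) :=
      ((tendsto_const_nhds.sub (hlim y)).abs)
    exact le_of_tendsto htq (eventually_atTop.2 ⟨n, fun q hq => hy n le_rfl q hq⟩)
  -- the good open sets
  set E : ℝ → Set X := fun ε => ⋃ n, interior (F ε n) with hE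
  have hEres : ∀ ε > (0 : ℝ), E ε ∈ residual X := by
    intro ε hε
    have hmea : IsMeagre (E ε)ᶜ := by
      have hsub : (E ε)ᶜ ⊆ ⋃ n, (F ε n \ interior (F ε n)) := by
        intro x hx
        obtain ⟨n, hn⟩ := hFcover ε hε x
        exact mem_iUnion.mpr ⟨n, hn, fun hint => hx (mem_iUnion.mpr ⟨n, hint⟩)⟩
      refine IsMeagre.mono hsub (isMeagre_iUnion fun n => ?_)
      -- `F ε n \ interior (F ε n)` is closed and nowhere dense
      have hcl : IsClosed (F ε n \ interior (F ε n)) :=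
        (hFclosed ε n).inter isOpen_interior.isClosed_compl
      have hint : interior (F ε n \ interior (F ε n)) = ∅ := by
        rw [eq_empty_iff_forall_notMem]
        intro x hx
        have h1 : x ∈ interior (F ε n) :=
          interior_mono diff_subset hx
        exact (interior_subset hx).2 h1
      rw [IsMeagre]
      have := (isClosed_isNowhereDense_iff_compl.mp
        ⟨hcl, hcl.isNowhereDense_iff.mpr hint⟩)
      exact residual_of_dense_open this.1 this.2
    rwa [IsMeagre, compl_compl] at hmea
  -- the residual set of continuity points
  have hS : (⋂ k : ℕ, E (1 / (k + 1))) ∈ residual X := by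
    refine countable_iInter_mem.mpr fun k => hEres _ (by positivity)
  refine mem_of_superset hS ?_
  intro x hx
  simp only [mem_iInter] at hx
  -- continuity at x
  rw [mem_setOf_eq, ContinuousAt, Metric.tendsto_nhds]
  intro ε hε
  obtain ⟨k, hk⟩ := exists_nat_one_div_lt (show (0 : ℝ) < ε / 4 by positivity)
  set η : ℝ := 1 / (k + 1) with hη
  have hη0 : 0 < η := by positivity
  obtain ⟨n, hn⟩ := mem_iUnion.mp (hx k)
  have h1 : interior (F η n) ∈ 𝓝 x := isOpen_interior.mem_nhds hn
  have h2 : ∀ᶠ y in 𝓝 x, dist (f n y) (f n x) < η :=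
    Metric.tendsto_nhds.mp (hf n).continuousAt η hη0
  filter_upwards [h1, h2] with y hy1 hy2
  have hyF : y ∈ F η n := interior_subset hy1
  have hxF : x ∈ F η n := interior_subset hn
  have b1 : |f n y - I y| ≤ η := hFlim η hη0 n y hyF
  have b2 : |f n x - I x| ≤ η := hFlim η hη0 n x hxF
  rw [Real.dist_eq] at hy2 ⊢
  have : |I y - I x| ≤ |f n y - I y| + |f n y - f n x| + |f n x - I x| := by
    have := abs_sub_abs_le_abs_sub (I y) (I x)
    calc |I y - I x| = |(-(f n y - I y)) + (f n y - f n x) + (f n x - I x)| := by ring_nf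
      _ ≤ |(-(f n y - I y)) + (f n y - f n x)| + |f n x - I x| := abs_add_le _ _
      _ ≤ |(-(f n y - I y))| + |f n y - f n x| + |f n x - I x| := by
          gcongr; exact abs_add_le _ _
      _ = |f n y - I y| + |f n y - f n x| + |f n x - I x| := by rw [abs_neg]
  have : |I y - I x| ≤ 3 * η := by linarith [hy2.le]
  have hηε : η < ε / 4 := hk
  linarith

/-- **Lemma 4.3** (Baire category argument). If `I : X → (-∞,0]` is of Baire class 1 on a
complete metric space `X` and on a dense subset `X₀` the value of `I` can always be strictly
increased by a quantified amount along sequences staying in `X₀`, then `I` vanishes on a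
residual subset of `X`. -/
theorem baire_category_lemma {X : Type*} [MetricSpace X] [CompleteSpace X]
    (I : X → ℝ) (hI_nonpos : ∀ x, I x ≤ 0)
    (hI_baire1 : ∃ f : ℕ → X → ℝ, (∀ n, Continuous (f n)) ∧
      ∀ x, Tendsto (fun n => f n x) atTop (𝓝 (I x)))
    (X0 : Set X) (hX0_ne : X0.Nonempty) (hX0_dense : Dense X0)
    (hprop : ∀ β : ℝ, β < 0 → ∃ α : ℝ, 0 < α ∧
      ∀ x ∈ X0, I x < β →
        ∃ xs : ℕ → X, (∀ n, xs n ∈ X0) ∧ Tendsto xs atTop (𝓝 x) ∧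
          I x + α ≤ liminf (fun n => I (xs n)) atTop) :
    ∃ S : Set X, S ∈ residual X ∧ ∀ x ∈ S, I x = 0 := by
  obtain ⟨f, hf, hlim⟩ := hI_baire1
  refine ⟨{x | ContinuousAt I x}, baire1_continuity_residual I f hf hlim, ?_⟩
  intro x hx
  by_contra hne
  have hlt : I x < 0 := lt_of_le_of_ne (hI_nonpos x) hne
  obtain ⟨α, hα, hstep⟩ := hprop (I x / 2) (by linarith)
  set ε : ℝ := min (α / 4) (-(I x) / 4) with hεdef
  have hε : 0 < ε := lt_min (by linarith) (by linarith)
  have hεα : ε ≤ α / 4 := min_le_left _ _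
  have hεI : ε ≤ -(I x) / 4 := min_le_right _ _
  obtain ⟨δ, hδ0, hδ⟩ := Metric.continuousAt_iff.mp hx ε hε
  -- pick a point of `X0` close to `x`
  obtain ⟨x₀, hx₀X0, hx₀ball⟩ := hX0_dense.exists_mem_open Metric.isOpen_ball
    ⟨x, Metric.mem_ball_self (by positivity : (0:ℝ) < δ / 2)⟩
  have hdist : dist x₀ x < δ / 2 := Metric.mem_ball.mp hx₀ball
  have hIx₀close : |I x₀ - I x| < ε := by
    have := hδ (show dist x₀ x < δ by linarith)
    rwa [Real.dist_eq] at this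
  have hIx₀lt : I x₀ < I x / 2 := by
    have h1 : I x₀ < I x + ε := by
      have := abs_sub_lt_iff.mp hIx₀close
      linarith [this.1]
    linarith
  obtain ⟨xs, hxsX0, hxs_tendsto, hliminf⟩ := hstep x₀ hx₀X0 hIx₀lt
  -- eventually the sequence stays within δ of x, hence `|I (xs m) - I x| < ε`
  have hnear : ∀ᶠ m in atTop, |I (xs m) - I x| < ε := by
    have h1 : ∀ᶠ m in atTop, dist (xs m) x₀ < δ / 2 :=
      Metric.tendsto_nhds.mp hxs_tendsto (δ / 2) (by positivity)
    filter_upwards [h1] with m hm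
    have hd : dist (xs m) x < δ := by
      calc dist (xs m) x ≤ dist (xs m) x₀ + dist x₀ x := dist_triangle _ _ _
        _ < δ / 2 + δ / 2 := by linarith
        _ = δ := by ring
    have := hδ hd
    rwa [Real.dist_eq] at this
  have hclose : ∀ᶠ m in atTop, I (xs m) < I x + ε := by
    filter_upwards [hnear] with m hm
    linarith [(abs_sub_lt_iff.mp hm).1]
  -- the sequence is eventually bounded below
  have hbdd : IsBoundedUnder (· ≥ ·) atTop (fun m => I (xs m)) := by
    refine ⟨I x - ε, ?_⟩
    rw [eventually_map]
    filter_upwards [hnear] with m hm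
    have := (abs_sub_lt_iff.mp hm).2
    simp only [ge_iff_le]
    linarith
  -- the liminf is large: `I x + 2ε < liminf`
  have hblt : I x + 2 * ε < liminf (fun m => I (xs m)) atTop := by
    have h1 : I x - ε < I x₀ := by linarith [(abs_sub_lt_iff.mp hIx₀close).2]
    have h2 : I x + 3 * ε ≤ I x - ε + α := by linarith
    calc I x + 2 * ε < I x + 3 * ε := by linarith
      _ ≤ I x - ε + α := h2
      _ < I x₀ + α := by linarith
      _ ≤ liminf (fun m => I (xs m)) atTop := hliminf
  have hgt : ∀ᶠ m in atTop, I x + 2 * ε < I (xs m) :=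
    eventually_lt_of_lt_liminf hblt hbdd
  obtain ⟨m, hm1, hm2⟩ := (hgt.and hclose).exists
  linarith
end

section
/- For every v ∈ ℝ³ and every symmetric traceless matrix V ∈ ℝ^{3×3}_{0,sym}, one has ½|v|² ≤ (3/2)·λ_max(v⊗v − V), where λ_max denotes the largest eigenvalue of a symmetric matrix; moreover, equality holds if and only if V = v⊗v − (1/3)|v|²·Id. -/
noncomputable section

/-- maximal eigenvalue of a (symmetric) real 3×3 matrix -/
def lamMax (A : Matrix (Fin 3) (Fin 3) ℝ) : ℝ :=
  sSup {r : ℝ | ∃ x : Fin 3 → ℝ, x ≠ 0 ∧ A.mulVec x = r • x}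

open Matrix

section aux

variable {A : Matrix (Fin 3) (Fin 3) ℝ} (hA : A.IsHermitian)

lemma eig_mem {r : ℝ} {x : Fin 3 → ℝ} (hx : x ≠ 0) (hAx : A.mulVec x = r • x) :
    ∃ i, hA.eigenvalues i = r := by
  set U : Matrix (Fin 3) (Fin 3) ℝ := (hA.eigenvectorUnitary : Matrix (Fin 3) (Fin 3) ℝ)
  set y : Fin 3 → ℝ := (star U) *ᵥ x with hy
  have hUU : U * star U = 1 := Unitary.coe_mul_star_self hA.eigenvectorUnitary
  have hUU' : star U * U = 1 := Unitary.coe_star_mul_self hA.eigenvectorUnitary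
  have hyne : y ≠ 0 := by
    intro h0
    apply hx
    have : U *ᵥ y = x := by
      rw [hy, mulVec_mulVec, hUU, one_mulVec]
    rw [h0, mulVec_zero] at this
    exact this.symm
  have hdiag : (diagonal (RCLike.ofReal ∘ hA.eigenvalues)) *ᵥ y = r • y := by
    rw [← hA.conjStarAlgAut_star_eigenvectorUnitary, Unitary.conjStarAlgAut_star_apply, hy, mulVec_mulVec, mul_assoc _ U, hUU, mul_one,
      ← mulVec_mulVec, hAx, mulVec_smul]
  obtain ⟨i, hi⟩ := Function.ne_iff.mp hyne
  refine ⟨i, ?_⟩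
  have := congrFun hdiag i
  simp only [mulVec_diagonal, Pi.smul_apply, smul_eq_mul, Function.comp_apply,
    RCLike.ofReal_real_eq_id, id_eq] at this
  exact mul_right_cancel₀ hi this

lemma eig_mem' (j : Fin 3) :
    hA.eigenvalues j ∈ {r : ℝ | ∃ x : Fin 3 → ℝ, x ≠ 0 ∧ A.mulVec x = r • x} := by
  refine ⟨hA.eigenvectorBasis j, ?_, hA.mulVec_eigenvectorBasis j⟩
  intro h
  exact hA.eigenvectorBasis.orthonormal.ne_zero j (by ext k; exact congrFun h k)

lemma trace_eq_sum_eig : A.trace = ∑ i, hA.eigenvalues i := by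
  set U : Matrix (Fin 3) (Fin 3) ℝ := (hA.eigenvectorUnitary : Matrix (Fin 3) (Fin 3) ℝ)
  have hUU' : star U * U = 1 := Unitary.coe_star_mul_self hA.eigenvectorUnitary
  calc A.trace = (U * diagonal (RCLike.ofReal ∘ hA.eigenvalues) * star U).trace := by
        conv_lhs => rw [hA.spectral_theorem, Unitary.conjStarAlgAut_apply]
    _ = (star U * U * diagonal (RCLike.ofReal ∘ hA.eigenvalues)).trace := by
        rw [trace_mul_cycle]
    _ = ∑ i, hA.eigenvalues i := by
        rw [hUU', one_mul, trace_diagonal]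
        simp

end aux

/-- **Inequality (3.5)–(3.6)**: for every `v ∈ ℝ³` and every symmetric traceless `V`,
`½|v|² ≤ (3/2) λ_max(v⊗v − V)`, with equality iff `V = v⊗v − (1/3)|v|² Id`. -/
theorem half_normsq_le_lamMax (v : Fin 3 → ℝ) (V : Matrix (Fin 3) (Fin 3) ℝ)
    (hsymm : V.IsSymm) (htrace : V.trace = 0) :
    (1/2) * (∑ i, v i ^ 2) ≤ (3/2) * lamMax (Matrix.vecMulVec v v - V) ∧
    ((1/2) * (∑ i, v i ^ 2) = (3/2) * lamMax (Matrix.vecMulVec v v - V) ↔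
      V = Matrix.vecMulVec v v - ((1/3) * ∑ i, v i ^ 2) • (1 : Matrix (Fin 3) (Fin 3) ℝ)) := by
  set A : Matrix (Fin 3) (Fin 3) ℝ := Matrix.vecMulVec v v - V with hAdef
  have hA : A.IsHermitian := by
    have h1 : (Matrix.vecMulVec v v).IsHermitian := by
      ext i j
      simp [Matrix.conjTranspose_apply, Matrix.vecMulVec_apply, mul_comm]
    have h2 : V.IsHermitian := by
      rw [Matrix.IsHermitian, Matrix.conjTranspose_eq_transpose_of_trivial]
      exact hsymm
    exact h1.sub h2
  -- trace of A
  have htrA : A.trace = ∑ i, v i ^ 2 := by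
    rw [hAdef, Matrix.trace_sub, htrace, sub_zero, Matrix.trace]
    simp [Matrix.diag, Matrix.vecMulVec_apply, sq]
  -- the maximum eigenvalue
  obtain ⟨i₀, -, hi₀⟩ := Finset.exists_max_image Finset.univ hA.eigenvalues ⟨0, Finset.mem_univ 0⟩
  set μ := hA.eigenvalues i₀ with hμ
  have hgreat : IsGreatest {r : ℝ | ∃ x : Fin 3 → ℝ, x ≠ 0 ∧ A.mulVec x = r • x} μ := by
    constructor
    · exact eig_mem' hA i₀
    · rintro r ⟨x, hx, hAx⟩
      obtain ⟨i, hi⟩ := eig_mem hA hx hAx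
      rw [← hi]
      exact hi₀ i (Finset.mem_univ i)
  have hlam : lamMax A = μ := hgreat.csSup_eq
  have hsum : ∑ i, hA.eigenvalues i = ∑ i, v i ^ 2 := by
    rw [← trace_eq_sum_eig hA, htrA]
  have hsum_le : ∑ i, v i ^ 2 ≤ 3 * μ := by
    rw [← hsum]
    calc ∑ i, hA.eigenvalues i ≤ ∑ _i : Fin 3, μ :=
          Finset.sum_le_sum fun i _ => hi₀ i (Finset.mem_univ i)
      _ = 3 * μ := by rw [Fin.sum_univ_three]; ring
  constructor
  · rw [hlam]; linarith
  constructor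
  · -- equality → V = ...
    intro heq
    rw [hlam] at heq
    have hall : ∀ i, hA.eigenvalues i = μ := by
      have hsum3 : ∑ i, v i ^ 2 = 3 * μ := by linarith
      have hzero : ∑ i : Fin 3, (μ - hA.eigenvalues i) = 0 := by
        rw [Finset.sum_sub_distrib, hsum, hsum3, Fin.sum_univ_three]
        ring
      intro i
      have := (Finset.sum_eq_zero_iff_of_nonneg
        (fun i _ => by linarith [hi₀ i (Finset.mem_univ i)])).mp hzero i (Finset.mem_univ i)
      linarith
    have hAone : A = μ • (1 : Matrix (Fin 3) (Fin 3) ℝ) := by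
      have hdiag : Matrix.diagonal (RCLike.ofReal ∘ hA.eigenvalues)
          = μ • (1 : Matrix (Fin 3) (Fin 3) ℝ) := by
        rw [Matrix.smul_one_eq_diagonal]
        ext i j
        rcases eq_or_ne i j with h | h <;> simp [Matrix.diagonal_apply, h, hall]
      calc A = _ := hA.spectral_theorem
        _ = μ • (1 : Matrix (Fin 3) (Fin 3) ℝ) := by
          have hUU : (hA.eigenvectorUnitary : Matrix (Fin 3) (Fin 3) ℝ) *
              star (hA.eigenvectorUnitary : Matrix (Fin 3) (Fin 3) ℝ) = 1 :=
            Unitary.coe_mul_star_self hA.eigenvectorUnitary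
          rw [hdiag, Unitary.conjStarAlgAut_apply, Matrix.mul_smul, Matrix.smul_mul, Matrix.mul_one, hUU]
    have hμval : μ = (1/3) * ∑ i, v i ^ 2 := by linarith
    have : V = Matrix.vecMulVec v v - A := by
      rw [hAdef]; abel
    rw [this, hAone, hμval]
  · -- V = ... → equality
    intro hV
    set c : ℝ := (1/3) * ∑ i, v i ^ 2 with hc
    have hAc : A = c • (1 : Matrix (Fin 3) (Fin 3) ℝ) := by
      rw [hAdef, hV]; abel
    have hset : {r : ℝ | ∃ x : Fin 3 → ℝ, x ≠ 0 ∧ A.mulVec x = r • x} = {c} := by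
      ext r
      simp only [Set.mem_setOf_eq, Set.mem_singleton_iff]
      constructor
      · rintro ⟨x, hx, hAx⟩
        rw [hAc, Matrix.smul_mulVec, Matrix.one_mulVec] at hAx
        obtain ⟨i, hi⟩ := Function.ne_iff.mp hx
        have := congrFun hAx i
        simp only [Pi.smul_apply, smul_eq_mul] at this
        exact (mul_right_cancel₀ hi this).symm
      · rintro rfl
        refine ⟨Pi.single 0 1, ?_, ?_⟩
        · intro h
          have := congrFun h 0
          simp at this
        · rw [hAc, Matrix.smul_mulVec, Matrix.one_mulVec]
    have : lamMax A = c := by rw [lamMax, hset, csSup_singleton]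
    rw [this, hc]; ring

end
end

section
/- For every v ∈ ℝ³ and every symmetric traceless matrix V ∈ ℝ^{3×3}_{0,sym}, one has |V|_{ℓ∞} ≤ 2|λ_min(V)| ≤ (4/3)·e(v,V), where |V|_{ℓ∞} = max_{i,j}|V_{ij}|, λ_min denotes the smallest eigenvalue of a symmetric matrix, and e(v,V) = (3/2)·λ_max(v⊗v − V). -/
noncomputable section

open Matrix

/-- minimal eigenvalue of a (symmetric) real 3×3 matrix -/
def lamMin (A : Matrix (Fin 3) (Fin 3) ℝ) : ℝ :=
  sInf {r : ℝ | ∃ x : Fin 3 → ℝ, x ≠ 0 ∧ A.mulVec x = r • x}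

section Aux

variable {A : Matrix (Fin 3) (Fin 3) ℝ}

lemma spectral' (hA : A.IsHermitian) :
    A = (hA.eigenvectorUnitary : Matrix (Fin 3) (Fin 3) ℝ) * diagonal hA.eigenvalues *
        star (hA.eigenvectorUnitary : Matrix (Fin 3) (Fin 3) ℝ) := by
  have := hA.spectral_theorem
  rwa [RCLike.ofReal_real_eq_id, Function.id_comp] at this

lemma eig_set_eq (hA : A.IsHermitian) :
    {r : ℝ | ∃ x : Fin 3 → ℝ, x ≠ 0 ∧ A.mulVec x = r • x} = Set.range hA.eigenvalues := by
  set U : Matrix (Fin 3) (Fin 3) ℝ := (hA.eigenvectorUnitary : Matrix (Fin 3) (Fin 3) ℝ) with hU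
  have hUs : U * star U = 1 := Matrix.mem_unitaryGroup_iff.mp hA.eigenvectorUnitary.2
  ext r
  constructor
  · rintro ⟨x, hx, hAx⟩
    set y : Fin 3 → ℝ := star U *ᵥ x with hy
    have hUy : U *ᵥ y = x := by
      rw [hy, mulVec_mulVec, hUs, one_mulVec]
    have hy0 : y ≠ 0 := by
      intro h
      apply hx
      rw [← hUy, h, mulVec_zero]
    have hDy : diagonal hA.eigenvalues *ᵥ y = r • y := by
      have hd : star U * A * U = diagonal hA.eigenvalues := by
        have := hA.conjStarAlgAut_star_eigenvectorUnitary
        rwa [Unitary.conjStarAlgAut_star_apply, RCLike.ofReal_real_eq_id, Function.id_comp] at this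
      calc diagonal hA.eigenvalues *ᵥ y = (star U * A * U) *ᵥ y := by rw [hd]
        _ = star U *ᵥ (A *ᵥ (U *ᵥ y)) := by simp only [Matrix.mulVec_mulVec, Matrix.mul_assoc]
        _ = star U *ᵥ (r • x) := by rw [hUy, hAx]
        _ = r • y := by rw [mulVec_smul]
    obtain ⟨i, hi⟩ := Function.ne_iff.mp hy0
    refine ⟨i, ?_⟩
    have := congrFun hDy i
    rw [mulVec_diagonal] at this
    have : hA.eigenvalues i * y i = r * y i := this
    exact mul_right_cancel₀ hi this
  · rintro ⟨i, rfl⟩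
    refine ⟨⇑(hA.eigenvectorBasis i), ?_, hA.mulVec_eigenvectorBasis i⟩
    intro h
    apply hA.eigenvectorBasis.orthonormal.ne_zero i
    ext j
    exact congrFun h j

lemma quad_eq (hA : A.IsHermitian) (x : Fin 3 → ℝ) :
    x ⬝ᵥ (A *ᵥ x) = ∑ i, hA.eigenvalues i *
        ((star (hA.eigenvectorUnitary : Matrix (Fin 3) (Fin 3) ℝ) *ᵥ x) i)^2 ∧
    x ⬝ᵥ x = ∑ i, ((star (hA.eigenvectorUnitary : Matrix (Fin 3) (Fin 3) ℝ) *ᵥ x) i)^2 := by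
  set U : Matrix (Fin 3) (Fin 3) ℝ := (hA.eigenvectorUnitary : Matrix (Fin 3) (Fin 3) ℝ) with hU
  have hUs : U * star U = 1 := Matrix.mem_unitaryGroup_iff.mp hA.eigenvectorUnitary.2
  set y : Fin 3 → ℝ := star U *ᵥ x with hy
  have hstar : star U = Uᵀ := by
    rw [Matrix.star_eq_conjTranspose, Matrix.conjTranspose]
    ext i j; simp
  have hUy : U *ᵥ y = x := by
    rw [hy, mulVec_mulVec, hUs, one_mulVec]
  have hdot : ∀ z : Fin 3 → ℝ, x ⬝ᵥ (U *ᵥ z) = y ⬝ᵥ z := by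
    intro z
    rw [Matrix.dotProduct_mulVec, hy, hstar, ← Matrix.mulVec_transpose]
  constructor
  · calc x ⬝ᵥ (A *ᵥ x) = x ⬝ᵥ ((U * diagonal hA.eigenvalues * star U) *ᵥ x) := by
          rw [← spectral' hA]
      _ = x ⬝ᵥ (U *ᵥ (diagonal hA.eigenvalues *ᵥ y)) := by
          simp only [← Matrix.mulVec_mulVec, ← hy]
      _ = y ⬝ᵥ (diagonal hA.eigenvalues *ᵥ y) := hdot _
      _ = ∑ i, hA.eigenvalues i * (y i)^2 := by
          simp [dotProduct, mulVec_diagonal]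
          ring_nf
          exact Finset.sum_congr rfl fun i _ => by ring
  · calc x ⬝ᵥ x = x ⬝ᵥ (U *ᵥ y) := by rw [hUy]
      _ = y ⬝ᵥ y := hdot _
      _ = ∑ i, (y i)^2 := by simp [dotProduct, pow_two]


lemma lamMin_eq (hA : A.IsHermitian) : lamMin A = sInf (Set.range hA.eigenvalues) := by
  rw [lamMin, eig_set_eq hA]

lemma lamMax_eq (hA : A.IsHermitian) : lamMax A = sSup (Set.range hA.eigenvalues) := by
  rw [lamMax, eig_set_eq hA]

lemma lamMin_le (hA : A.IsHermitian) (i : Fin 3) : lamMin A ≤ hA.eigenvalues i := by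
  rw [lamMin_eq hA]
  exact csInf_le (Set.finite_range _).bddBelow ⟨i, rfl⟩

lemma le_lamMax (hA : A.IsHermitian) (i : Fin 3) : hA.eigenvalues i ≤ lamMax A := by
  rw [lamMax_eq hA]
  exact le_csSup (Set.finite_range _).bddAbove ⟨i, rfl⟩

lemma lamMin_mem (hA : A.IsHermitian) : ∃ i, hA.eigenvalues i = lamMin A := by
  rw [lamMin_eq hA]
  exact (Set.range_nonempty _).csInf_mem (Set.finite_range _)

lemma lamMax_mem (hA : A.IsHermitian) : ∃ i, hA.eigenvalues i = lamMax A := by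
  rw [lamMax_eq hA]
  exact (Set.range_nonempty _).csSup_mem (Set.finite_range _)

lemma rayleigh_le (hA : A.IsHermitian) (x : Fin 3 → ℝ) :
    x ⬝ᵥ (A *ᵥ x) ≤ lamMax A * (x ⬝ᵥ x) := by
  obtain ⟨h1, h2⟩ := quad_eq hA x
  rw [h1, h2, Finset.mul_sum]
  exact Finset.sum_le_sum fun i _ =>
    mul_le_mul_of_nonneg_right (le_lamMax hA i) (sq_nonneg _)

lemma rayleigh_ge (hA : A.IsHermitian) (x : Fin 3 → ℝ) :
    lamMin A * (x ⬝ᵥ x) ≤ x ⬝ᵥ (A *ᵥ x) := by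
  obtain ⟨h1, h2⟩ := quad_eq hA x
  rw [h1, h2, Finset.mul_sum]
  exact Finset.sum_le_sum fun i _ =>
    mul_le_mul_of_nonneg_right (lamMin_le hA i) (sq_nonneg _)

lemma trace_eq_sum (hA : A.IsHermitian) : A.trace = ∑ i, hA.eigenvalues i := by
  have hsU : star (hA.eigenvectorUnitary : Matrix (Fin 3) (Fin 3) ℝ) *
      (hA.eigenvectorUnitary : Matrix (Fin 3) (Fin 3) ℝ) = 1 :=
    Matrix.mem_unitaryGroup_iff'.mp hA.eigenvectorUnitary.2
  conv_lhs => rw [spectral' hA]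
  rw [Matrix.trace_mul_cycle, hsU, one_mul, Matrix.trace_diagonal]

end Aux

/-- **Inequality (3.7)**: for `v ∈ ℝ³` and symmetric traceless `V`,
`|V|_{ℓ∞} ≤ 2|λ_min(V)| ≤ (4/3) e(v,V)` where `e(v,V) = (3/2) λ_max(v⊗v − V)`. -/
theorem linfty_le_lamMin_le_e (v : Fin 3 → ℝ) (V : Matrix (Fin 3) (Fin 3) ℝ)
    (hsymm : V.IsSymm) (htrace : V.trace = 0) :
    (∀ i j, |V i j| ≤ 2 * |lamMin V|) ∧
    2 * |lamMin V| ≤ (4/3) * ((3/2) * lamMax (Matrix.vecMulVec v v - V)) := by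
  classical
  have hsym' : ∀ i j, V j i = V i j := by
    intro i j
    conv_lhs => rw [← hsymm]
    rfl
  have hV : V.IsHermitian := by
    rw [Matrix.IsHermitian]
    ext i j
    simp [Matrix.conjTranspose_apply, hsym' i j]
  set m := lamMin V with hm
  have trace0 : ∑ i, hV.eigenvalues i = 0 := by
    rw [← trace_eq_sum hV, htrace]
  have hmle : ∀ i, m ≤ hV.eigenvalues i := lamMin_le hV
  have hm0 : m ≤ 0 := by
    by_contra h
    push_neg at h
    have : (0:ℝ) < ∑ i, hV.eigenvalues i :=
      Finset.sum_pos (fun i _ => lt_of_lt_of_le h (hmle i)) ⟨0, Finset.mem_univ 0⟩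
    linarith
  have habs : |m| = -m := abs_of_nonpos hm0
  have hMax : lamMax V ≤ -(2*m) := by
    obtain ⟨j, hj⟩ := lamMax_mem hV
    have h2m : (2:ℝ)*m ≤ ∑ i ∈ Finset.univ.erase j, hV.eigenvalues i := by
      have hc : (Finset.univ.erase j).card = 2 := by
        rw [Finset.card_erase_of_mem (Finset.mem_univ j)]
        simp
      have := Finset.card_nsmul_le_sum (Finset.univ.erase j) hV.eigenvalues m
        (fun i _ => hmle i)
      rw [hc] at this
      simpa [nsmul_eq_mul] using this
    have hsplit : hV.eigenvalues j + ∑ i ∈ Finset.univ.erase j, hV.eigenvalues i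
        = ∑ i, hV.eigenvalues i :=
      Finset.add_sum_erase Finset.univ hV.eigenvalues (Finset.mem_univ j)
    rw [← hj]
    linarith
  constructor
  · intro i j
    by_cases hij : i = j
    · subst hij
      have hq : (Pi.single i 1 : Fin 3 → ℝ) ⬝ᵥ (V *ᵥ Pi.single i 1) = V i i := by
        simp [Matrix.mulVec_single, single_dotProduct]
      have hd : (Pi.single i 1 : Fin 3 → ℝ) ⬝ᵥ (Pi.single i 1) = 1 := by
        simp [single_dotProduct, Pi.single_apply]
      have h1 := rayleigh_le hV (Pi.single i 1)
      have h2 := rayleigh_ge hV (Pi.single i 1)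
      rw [hq, hd, mul_one] at h1 h2
      rw [abs_le]
      constructor <;> linarith [abs_nonneg m, neg_abs_le m]
    · set ep : Fin 3 → ℝ := Pi.single i 1 + Pi.single j 1 with hep
      set em : Fin 3 → ℝ := Pi.single i 1 - Pi.single j 1 with hem
      have hQp : ep ⬝ᵥ (V *ᵥ ep) = V i i + V i j + V j i + V j j := by
        simp [hep, Matrix.mulVec_add, dotProduct_add, add_dotProduct,
          Matrix.mulVec_single, single_dotProduct]
        ring
      have hQm : em ⬝ᵥ (V *ᵥ em) = V i i - V i j - V j i + V j j := by
        simp [hem, Matrix.mulVec_sub, dotProduct_sub, sub_dotProduct,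
          Matrix.mulVec_single, single_dotProduct]
        ring
      have hdp : ep ⬝ᵥ ep = 2 := by
        simp [hep, dotProduct_add, add_dotProduct,
          single_dotProduct, Pi.single_apply, hij, Ne.symm hij]
        norm_num
      have hdm : em ⬝ᵥ em = 2 := by
        simp [hem, dotProduct_sub, sub_dotProduct,
          single_dotProduct, Pi.single_apply, hij, Ne.symm hij]
        norm_num
      have h1 := rayleigh_le hV ep
      have h2 := rayleigh_ge hV ep
      have h3 := rayleigh_le hV em
      have h4 := rayleigh_ge hV em
      rw [hQp, hdp] at h1 h2
      rw [hQm, hdm] at h3 h4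
      have hji : V j i = V i j := hsym' i j
      rw [abs_le]
      constructor <;> linarith
  · obtain ⟨i0, hi0⟩ := lamMin_mem hV
    set x : Fin 3 → ℝ := ⇑(hV.eigenvectorBasis i0) with hx
    have hx0 : x ≠ 0 := by
      intro h
      apply hV.eigenvectorBasis.orthonormal.ne_zero i0
      ext k
      exact congrFun h k
    have hVx : V *ᵥ x = m • x := by
      rw [hx, hV.mulVec_eigenvectorBasis, hi0]
    have hxx : 0 < x ⬝ᵥ x := by
      rcases lt_or_eq_of_le (Finset.sum_nonneg fun k _ => mul_self_nonneg (x k)) with h | h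
      · exact h
      · exact absurd (dotProduct_self_eq_zero.mp h.symm) hx0
    set B : Matrix (Fin 3) (Fin 3) ℝ := Matrix.vecMulVec v v - V with hBdef
    have hB : B.IsHermitian := by
      rw [Matrix.IsHermitian]
      ext a b
      simp [hBdef, Matrix.conjTranspose_apply, Matrix.vecMulVec_apply, hsym' a b, mul_comm]
    have hvv : Matrix.vecMulVec v v *ᵥ x = (v ⬝ᵥ x) • v := by
      ext a
      simp only [Matrix.vecMulVec_apply, Matrix.mulVec, dotProduct,
        Pi.smul_apply, smul_eq_mul, Finset.sum_mul, Finset.mul_sum]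
      exact Finset.sum_congr rfl fun b _ => by ring
    have hq : x ⬝ᵥ (B *ᵥ x) = (v ⬝ᵥ x)^2 - m * (x ⬝ᵥ x) := by
      rw [hBdef, Matrix.sub_mulVec, dotProduct_sub, hvv, hVx,
        dotProduct_smul, dotProduct_smul, dotProduct_comm x v]
      simp [smul_eq_mul]
      ring
    have hr := rayleigh_le hB x
    rw [hq] at hr
    have hvx2 : 0 ≤ (v ⬝ᵥ x)^2 := sq_nonneg _
    have hkey : -m ≤ lamMax B := by
      have hmul : (-m) * (x ⬝ᵥ x) ≤ lamMax B * (x ⬝ᵥ x) := by linarith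
      exact le_of_mul_le_mul_right hmul hxx
    rw [habs]
    linarith
end
end
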